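/- Let μ be a positive Borel measure on ℂ of finite upper density, let r_0 > 0, and fix a ∈ (0, 1], b ∈ [1, ∞). Then for the right logarithmic measure l⁺_μ(r, R) := ∫_{r < |z| ≤ R, Re z > 0} Re(1/z) dμ(z), the difference |l⁺_μ(r, R) − l⁺_μ(a·r, b·R)| is bounded uniformly over all r_0 ≤ r < R < ∞. -/

import Mathlib

open Real Set Filter MeasureTheory Complex

namespace Stmt11Aux

/-- The annular half-set. -/
def E (s t : ℝ) : Set ℂ := {z : ℂ | s < ‖z‖ ∧ ‖z‖ ≤ t ∧ 0 < z.re}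

lemma measE (s t : ℝ) : MeasurableSet (E s t) := by
  have h1 : MeasurableSet {z : ℂ | s < ‖z‖} :=
    measurableSet_lt measurable_const continuous_norm.measurable
  have h2 : MeasurableSet {z : ℂ | ‖z‖ ≤ t} :=
    measurableSet_le continuous_norm.measurable measurable_const
  have h3 : MeasurableSet {z : ℂ | 0 < z.re} :=
    measurableSet_lt measurable_const Complex.measurable_re
  exact (h1.inter (h2.inter h3) : _)

lemma E_subset_closedBall (s t : ℝ) : E s t ⊆ Metric.closedBall (0:ℂ) t := by
  intro z hz
  rw [Metric.mem_closedBall, dist_zero_right]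
  exact hz.2.1

lemma E_union {s t u : ℝ} (h1 : s ≤ t) (h2 : t ≤ u) : E s u = E s t ∪ E t u := by
  ext z
  simp only [E, Set.mem_union, Set.mem_setOf_eq]
  constructor
  · rintro ⟨hs, hu, hre⟩
    by_cases h : ‖z‖ ≤ t
    · exact Or.inl ⟨hs, h, hre⟩
    · exact Or.inr ⟨lt_of_not_ge h, hu, hre⟩
  · rintro (⟨hs, ht, hre⟩ | ⟨ht, hu, hre⟩)
    · exact ⟨hs, le_trans ht h2, hre⟩
    · exact ⟨lt_of_le_of_lt h1 ht, hu, hre⟩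

lemma E_disj (s t u : ℝ) : Disjoint (E s t) (E t u) := by
  rw [Set.disjoint_left]
  rintro z ⟨_, h1, _⟩ ⟨h2, _, _⟩
  exact absurd h1 (not_le.mpr h2)

lemma norm_f_le {s t : ℝ} (hs : 0 < s) {z : ℂ} (hz : z ∈ E s t) :
    ‖((1 : ℂ) / z).re‖ ≤ 1 / s := by
  obtain ⟨h1, _, _⟩ := hz
  have habs : 0 < ‖z‖ := lt_trans hs h1
  have hz0 : z ≠ 0 := by
    intro h; rw [h] at habs; simp at habs
  rw [one_div, Complex.inv_re, Real.norm_eq_abs, Complex.normSq_eq_norm_sq]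
  rw [abs_div, _root_.abs_of_nonneg (pow_nonneg (norm_nonneg z) 2)]
  have h2 : |z.re| ≤ ‖z‖ := Complex.abs_re_le_norm z
  calc |z.re| / ‖z‖ ^ 2 ≤ ‖z‖ / ‖z‖ ^ 2 := by
        gcongr
    _ = 1 / ‖z‖ := by field_simp [habs.ne']
    _ ≤ 1 / s := by
        apply one_div_le_one_div_of_le hs h1.le

end Stmt11Aux

open Stmt11Aux

/-- For a positive Borel measure `μ` on `ℂ` of finite upper density, `r₀ > 0`,
`a ∈ (0,1]`, `b ∈ [1,∞)`, the difference `|l⁺_μ(r,R) − l⁺_μ(a r, b R)|` is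
uniformly bounded over `r₀ ≤ r < R < ∞`. -/
theorem stmt11 (μ : Measure ℂ)
    (hfin : ∀ r : ℝ, μ (Metric.ball (0:ℂ) r) ≠ ⊤)
    (hden : Filter.limsup
        (fun r : ℝ => (((μ (Metric.ball (0:ℂ) r)).toReal / r : ℝ) : EReal))
        Filter.atTop < ⊤)
    (r₀ : ℝ) (hr₀ : 0 < r₀) (a b : ℝ) (ha : a ∈ Set.Ioc (0:ℝ) 1)
    (hb : b ∈ Set.Ici (1:ℝ)) :
    ∃ C : ℝ, ∀ r R : ℝ, r₀ ≤ r → r < R →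
      |(∫ z in {z : ℂ | r < ‖z‖ ∧ ‖z‖ ≤ R ∧ 0 < z.re},
          ((1 : ℂ) / z).re ∂μ)
        - ∫ z in {z : ℂ | a * r < ‖z‖ ∧ ‖z‖ ≤ b * R ∧ 0 < z.re},
            ((1 : ℂ) / z).re ∂μ| ≤ C := by
  obtain ⟨ha0, ha1⟩ := ha
  have hb1 : (1:ℝ) ≤ b := hb
  -- get density bound
  obtain ⟨c, hc1, -⟩ := EReal.exists_between_coe_real hden
  have hev : ∀ᶠ t in atTop,
      (((μ (Metric.ball (0:ℂ) t)).toReal / t : ℝ) : EReal) < (c : EReal) :=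
    Filter.eventually_lt_of_limsup_lt hc1
  obtain ⟨t₀, ht₀⟩ := hev.exists_forall_of_atTop
  set T : ℝ := max t₀ 1 with hT
  have hT1 : (1:ℝ) ≤ T := le_max_right _ _
  -- uniform bound on closed balls
  have key : ∀ t : ℝ, r₀ ≤ t →
      (μ (Metric.closedBall (0:ℂ) t)).toReal ≤ (max c 0 * (2 + T / r₀)) * t := by
    intro t ht
    have htpos : 0 < t := lt_of_lt_of_le hr₀ ht
    set u : ℝ := 2 * t + T with hu
    have hu_ge : t₀ ≤ u := by
      have : t₀ ≤ T := le_max_left _ _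
      nlinarith
    have hupos : 0 < u := by nlinarith
    have hsub : Metric.closedBall (0:ℂ) t ⊆ Metric.ball (0:ℂ) u := by
      apply Metric.closedBall_subset_ball
      nlinarith
    have hmono : (μ (Metric.closedBall (0:ℂ) t)).toReal ≤
        (μ (Metric.ball (0:ℂ) u)).toReal :=
      ENNReal.toReal_mono (hfin u) (measure_mono hsub)
    have hdiv : ((μ (Metric.ball (0:ℂ) u)).toReal / u : ℝ) < c := by
      have := ht₀ u hu_ge
      exact_mod_cast this
    have hball : (μ (Metric.ball (0:ℂ) u)).toReal ≤ max c 0 * u := by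
      have h1 : (μ (Metric.ball (0:ℂ) u)).toReal < c * u :=
        (div_lt_iff₀ hupos).mp hdiv
      nlinarith [le_max_left c 0, hupos.le]
    have hTt : T ≤ (T / r₀) * t := by
      rw [div_mul_eq_mul_div, le_div_iff₀ hr₀]
      nlinarith
    calc (μ (Metric.closedBall (0:ℂ) t)).toReal ≤ max c 0 * u := le_trans hmono hball
      _ ≤ max c 0 * (2 * t + (T / r₀) * t) := by
          apply mul_le_mul_of_nonneg_left _ (le_max_right c 0)
          linarith
      _ = (max c 0 * (2 + T / r₀)) * t := by ring
  set M : ℝ := max c 0 * (2 + T / r₀) with hM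
  have hM0 : 0 ≤ M := by
    apply mul_nonneg (le_max_right c 0)
    have : 0 ≤ T / r₀ := div_nonneg (by linarith) hr₀.le
    linarith
  refine ⟨M / a + M * b, ?_⟩
  intro r R hr hrR
  have hrpos : 0 < r := lt_of_lt_of_le hr₀ hr
  have hRpos : 0 < R := lt_trans hrpos hrR
  have harpos : 0 < a * r := mul_pos ha0 hrpos
  have hbRpos : 0 < b * R := mul_pos (lt_of_lt_of_le one_pos hb1) hRpos
  have har_le : a * r ≤ r := by nlinarith
  have hbR_ge : R ≤ b * R := by nlinarith
  -- finiteness of measures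
  have hEfin : ∀ s t : ℝ, μ (E s t) < ⊤ := by
    intro s t
    calc μ (E s t) ≤ μ (Metric.ball (0:ℂ) (t + 1)) := by
          apply measure_mono
          refine (E_subset_closedBall s t).trans (Metric.closedBall_subset_ball ?_)
          linarith
      _ < ⊤ := lt_top_iff_ne_top.mpr (hfin (t + 1))
  -- integrability
  have hmeas : AEStronglyMeasurable (fun z : ℂ => ((1 : ℂ) / z).re) μ := by
    apply Measurable.aestronglyMeasurable
    exact Complex.measurable_re.comp (measurable_const.div measurable_id)
  have hInt : ∀ s t : ℝ, 0 < s → IntegrableOn (fun z : ℂ => ((1 : ℂ) / z).re) (E s t) μ := by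
    intro s t hs
    apply Measure.integrableOn_of_bounded (M := 1 / s) (hEfin s t).ne hmeas
    rw [ae_restrict_iff' (measE s t)]
    exact ae_of_all _ fun z hz => norm_f_le hs hz
  -- split the big integral
  have hsplit1 : ∫ z in E (a*r) (b*R), ((1 : ℂ) / z).re ∂μ
      = (∫ z in E (a*r) r, ((1 : ℂ) / z).re ∂μ)
        + ∫ z in E r (b*R), ((1 : ℂ) / z).re ∂μ := by
    rw [E_union har_le (le_trans hrR.le hbR_ge)]
    exact setIntegral_union (E_disj _ _ _) (measE _ _) (hInt _ _ harpos) (hInt _ _ hrpos)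
  have hsplit2 : ∫ z in E r (b*R), ((1 : ℂ) / z).re ∂μ
      = (∫ z in E r R, ((1 : ℂ) / z).re ∂μ)
        + ∫ z in E R (b*R), ((1 : ℂ) / z).re ∂μ := by
    rw [E_union hrR.le hbR_ge]
    exact setIntegral_union (E_disj _ _ _) (measE _ _) (hInt _ _ hrpos) (hInt _ _ hRpos)
  -- bound first extra piece
  have hbound1 : ‖∫ z in E (a*r) r, ((1 : ℂ) / z).re ∂μ‖ ≤ M / a := by
    have h := norm_setIntegral_le_of_norm_le_const (μ := μ) (s := E (a*r) r)
      (hEfin _ _) (fun z hz => norm_f_le harpos hz)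
    refine h.trans ?_
    have hμ : (μ (E (a*r) r)).toReal ≤ M * r := by
      refine le_trans (ENNReal.toReal_mono ?_ (measure_mono (E_subset_closedBall _ _))) (key r hr)
      · have hsub : Metric.closedBall (0:ℂ) r ⊆ Metric.ball (0:ℂ) (r+1) :=
          Metric.closedBall_subset_ball (by linarith)
        exact fun h => hfin (r+1) (top_le_iff.mp (h ▸ measure_mono hsub))
    calc 1 / (a*r) * (μ (E (a*r) r)).toReal ≤ 1 / (a*r) * (M * r) := by
          apply mul_le_mul_of_nonneg_left hμ (by positivity)
      _ = M / a := by field_simp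
  -- bound second extra piece
  have hbound2 : ‖∫ z in E R (b*R), ((1 : ℂ) / z).re ∂μ‖ ≤ M * b := by
    have h := norm_setIntegral_le_of_norm_le_const (μ := μ) (s := E R (b*R))
      (hEfin _ _) (fun z hz => norm_f_le hRpos hz)
    refine h.trans ?_
    have hμ : (μ (E R (b*R))).toReal ≤ M * (b*R) := by
      refine le_trans (ENNReal.toReal_mono ?_ (measure_mono (E_subset_closedBall _ _)))
        (key (b*R) (by linarith))
      · have hsub : Metric.closedBall (0:ℂ) (b*R) ⊆ Metric.ball (0:ℂ) (b*R+1) :=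
          Metric.closedBall_subset_ball (by linarith)
        exact fun h => hfin (b*R+1) (top_le_iff.mp (h ▸ measure_mono hsub))
    calc 1 / R * (μ (E R (b*R))).toReal ≤ 1 / R * (M * (b*R)) := by
          apply mul_le_mul_of_nonneg_left hμ (by positivity)
      _ = M * b := by field_simp
  -- conclude
  show |(∫ z in E r R, ((1 : ℂ) / z).re ∂μ)
      - ∫ z in E (a*r) (b*R), ((1 : ℂ) / z).re ∂μ| ≤ M / a + M * b
  rw [hsplit1, hsplit2]
  have habs : |(∫ z in E r R, ((1 : ℂ) / z).re ∂μ)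
      - ((∫ z in E (a*r) r, ((1 : ℂ) / z).re ∂μ)
        + ((∫ z in E r R, ((1 : ℂ) / z).re ∂μ)
          + ∫ z in E R (b*R), ((1 : ℂ) / z).re ∂μ))|
      = |(∫ z in E (a*r) r, ((1 : ℂ) / z).re ∂μ)
        + ∫ z in E R (b*R), ((1 : ℂ) / z).re ∂μ| := by
    rw [show (∫ z in E r R, ((1 : ℂ) / z).re ∂μ)
      - ((∫ z in E (a*r) r, ((1 : ℂ) / z).re ∂μ)
        + ((∫ z in E r R, ((1 : ℂ) / z).re ∂μ)
          + ∫ z in E R (b*R), ((1 : ℂ) / z).re ∂μ))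
      = -((∫ z in E (a*r) r, ((1 : ℂ) / z).re ∂μ)
        + ∫ z in E R (b*R), ((1 : ℂ) / z).re ∂μ) from by ring, abs_neg]
  rw [habs]
  calc |(∫ z in E (a*r) r, ((1 : ℂ) / z).re ∂μ)
        + ∫ z in E R (b*R), ((1 : ℂ) / z).re ∂μ|
      ≤ |∫ z in E (a*r) r, ((1 : ℂ) / z).re ∂μ|
        + |∫ z in E R (b*R), ((1 : ℂ) / z).re ∂μ| := abs_add_le _ _
    _ ≤ M / a + M * b := add_le_add hbound1 hbound2
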